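/- Let R > 0 and let f : (-R, R) → ℝ be an (M₁, M₂)-diffeomorphism. Let d ≥ 1 be an integer and let 0 < γ₀ < γ₁ < ⋯ < γ_d = 1 be scale parameters. For each 1 ≤ k ≤ d define Δ_k := f_[γ_k] ∘ f_[γ_{k−1}]⁻¹ and ψ_k(x) := Δ_k(x) − x, where f_[γ](x) := f(γx)/γ. Then ψ_k is C₁·R·(γ_k − γ_{k−1})-Lipschitz on its domain, where C₁ := 3·M₁·M₂. -/

import Mathlib

/-- Let `f : (-R, R) → ℝ` be an `(M₁, M₂)`-diffeomorphism (with inverse `g`,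
first/second derivatives `f', f''` and `g', g''`), let `0 < γ₀ < γ₁ < ⋯ < γ_d = 1`.
For `1 ≤ k ≤ d` the rung `ψ_k(x) = f_[γ_k](f_[γ_{k-1}]⁻¹(x)) - x` of the ladder decomposition
is `C₁·R·(γ_k - γ_{k-1})`-Lipschitz on its domain (the range of `f_[γ_{k-1}]`), where
`C₁ = 3·M₁·M₂`. -/
theorem ladder_rung_lipschitz
    (R M₁ M₂ : ℝ) (hR : 0 < R) (d : ℕ) (hd : 1 ≤ d)
    (γ : ℕ → ℝ) (hγ0 : 0 < γ 0) (hγmono : ∀ i, i < d → γ i < γ (i + 1)) (hγd : γ d = 1)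
    (f g f' g' f'' g'' : ℝ → ℝ)
    (hgf : ∀ x ∈ Set.Ioo (-R) R, g (f x) = x)
    (hf_lip : ∀ x ∈ Set.Ioo (-R) R, ∀ y ∈ Set.Ioo (-R) R, |f x - f y| ≤ M₁ * |x - y|)
    (hf' : ∀ x ∈ Set.Ioo (-R) R, HasDerivAt f (f' x) x)
    (hf'' : ∀ x ∈ Set.Ioo (-R) R, HasDerivAt f' (f'' x) x)
    (hf'_lip : ∀ x ∈ Set.Ioo (-R) R, ∀ y ∈ Set.Ioo (-R) R, |f' x - f' y| ≤ M₂ * |x - y|)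
    (hg_lip : ∀ x ∈ f '' Set.Ioo (-R) R, ∀ y ∈ f '' Set.Ioo (-R) R, |g x - g y| ≤ M₁ * |x - y|)
    (hg' : ∀ x ∈ f '' Set.Ioo (-R) R, HasDerivAt g (g' x) x)
    (hg'' : ∀ x ∈ f '' Set.Ioo (-R) R, HasDerivAt g' (g'' x) x)
    (hg'_lip : ∀ x ∈ f '' Set.Ioo (-R) R, ∀ y ∈ f '' Set.Ioo (-R) R,
      |g' x - g' y| ≤ M₂ * |x - y|)
    (k : ℕ) (hk1 : 1 ≤ k) (hkd : k ≤ d) :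
    ∀ x ∈ (fun t => f (γ (k - 1) * t) / γ (k - 1)) '' Set.Ioo (-R) R,
    ∀ y ∈ (fun t => f (γ (k - 1) * t) / γ (k - 1)) '' Set.Ioo (-R) R,
      |(f (γ k * (g (γ (k - 1) * x) / γ (k - 1))) / γ k - x) -
          (f (γ k * (g (γ (k - 1) * y) / γ (k - 1))) / γ k - y)|
        ≤ 3 * M₁ * M₂ * R * (γ k - γ (k - 1)) * |x - y| := by
  -- monotonicity of γ on [0, d]
  have key : ∀ i j : ℕ, i ≤ j → j ≤ d → γ i ≤ γ j := by
    intro i j hij hjd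
    induction j with
    | zero => simp_all
    | succ n ih =>
      rcases Nat.lt_or_ge i (n + 1) with h | h
      · exact le_trans (ih (Nat.lt_succ_iff.mp h) (by omega))
          (le_of_lt (hγmono n (by omega)))
      · have : i = n + 1 := by omega
        simp [this]
  set a := γ (k - 1) with ha_def
  set b := γ k with hb_def
  have ha0 : 0 < a := lt_of_lt_of_le hγ0 (key 0 (k - 1) (by omega) (by omega))
  have hab : a < b := by
    have := hγmono (k - 1) (by omega)
    rwa [Nat.sub_add_cancel hk1] at this
  have hb1 : b ≤ 1 := by
    have := key k d hkd le_rfl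
    rwa [hγd] at this
  have ha1 : a ≤ 1 := le_trans hab.le hb1
  have hb0 : 0 < b := lt_trans ha0 hab
  -- membership lemmas
  have hmem : ∀ c : ℝ, 0 < c → c ≤ 1 → ∀ u ∈ Set.Ioo (-R) R, c * u ∈ Set.Ioo (-R) R := by
    intro c hc hc1 u hu
    obtain ⟨h1, h2⟩ := hu
    constructor <;> nlinarith
  have h0mem : (0 : ℝ) ∈ Set.Ioo (-R) R := by constructor <;> linarith
  have hR2mem : (R / 2 : ℝ) ∈ Set.Ioo (-R) R := by constructor <;> linarith
  -- nonnegativity of the constants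
  have hM1 : 0 ≤ M₁ := by
    have := hf_lip 0 h0mem (R / 2) hR2mem
    have h2 : |(0 : ℝ) - R / 2| = R / 2 := by rw [abs_sub_comm]; simp [abs_of_pos, hR.le]; positivity
    rw [h2] at this
    nlinarith [abs_nonneg (f 0 - f (R / 2))]
  have hM2 : 0 ≤ M₂ := by
    have := hf'_lip 0 h0mem (R / 2) hR2mem
    have h2 : |(0 : ℝ) - R / 2| = R / 2 := by rw [abs_sub_comm]; simp [abs_of_pos, hR.le]; positivity
    rw [h2] at this
    nlinarith [abs_nonneg (f' 0 - f' (R / 2))]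
  -- derivative of the dilation
  have hderiv : ∀ c : ℝ, 0 < c → c ≤ 1 → ∀ u ∈ Set.Ioo (-R) R,
      HasDerivAt (fun v => f (c * v) / c) (f' (c * u)) u := by
    intro c hc hc1 u hu
    have h1 : HasDerivAt (fun v => f (c * v)) (f' (c * u) * c) u := by
      have := (hf' (c * u) (hmem c hc hc1 u hu)).comp u ((hasDerivAt_id u).const_mul c)
      simpa [Function.comp_def] using this
    have h2 := h1.div_const c
    have h3 : f' (c * u) * c / c = f' (c * u) := by field_simp
    rwa [h3] at h2
  -- MVT bound on h(u) = f(bu)/b - f(au)/a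
  have hMVT : ∀ t ∈ Set.Ioo (-R) R, ∀ s ∈ Set.Ioo (-R) R,
      |(f (b * t) / b - f (a * t) / a) - (f (b * s) / b - f (a * s) / a)|
        ≤ M₂ * (b - a) * R * |t - s| := by
    intro t ht s hs
    have hD : ∀ u ∈ Set.Ioo (-R) R,
        HasDerivWithinAt (fun v => f (b * v) / b - f (a * v) / a)
          (f' (b * u) - f' (a * u)) (Set.Ioo (-R) R) u := by
      intro u hu
      exact ((hderiv b hb0 hb1 u hu).sub (hderiv a ha0 ha1 u hu)).hasDerivWithinAt
    have hbound : ∀ u ∈ Set.Ioo (-R) R, ‖f' (b * u) - f' (a * u)‖ ≤ M₂ * (b - a) * R := by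
      intro u hu
      have h1 := hf'_lip (b * u) (hmem b hb0 hb1 u hu) (a * u) (hmem a ha0 ha1 u hu)
      have h2 : |b * u - a * u| = (b - a) * |u| := by
        rw [← sub_mul, abs_mul, abs_of_pos (sub_pos.2 hab)]
      have h3 : |u| ≤ R := by
        rw [abs_le]; exact ⟨hu.1.le, hu.2.le⟩
      rw [h2] at h1
      have hba : (0:ℝ) ≤ b - a := (sub_pos.2 hab).le
      have h4 : M₂ * ((b - a) * |u|) ≤ M₂ * ((b - a) * R) :=
        mul_le_mul_of_nonneg_left (mul_le_mul_of_nonneg_left h3 hba) hM2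
      calc ‖f' (b * u) - f' (a * u)‖ = |f' (b * u) - f' (a * u)| := rfl
        _ ≤ M₂ * ((b - a) * |u|) := h1
        _ ≤ M₂ * (b - a) * R := by linarith [h4]
    have := (convex_Ioo (-R) R).norm_image_sub_le_of_norm_hasDerivWithin_le hD hbound hs ht
    simpa [Real.norm_eq_abs] using this
  -- main proof
  intro x hx y hy
  obtain ⟨t, ht, rfl⟩ := hx
  obtain ⟨s, hs, rfl⟩ := hy
  simp only
  have hat : a * t ∈ Set.Ioo (-R) R := hmem a ha0 ha1 t ht
  have has : a * s ∈ Set.Ioo (-R) R := hmem a ha0 ha1 s hs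
  have e1 : a * (f (a * t) / a) = f (a * t) := mul_div_cancel₀ _ ha0.ne'
  have e2 : a * (f (a * s) / a) = f (a * s) := mul_div_cancel₀ _ ha0.ne'
  rw [e1, e2, hgf (a * t) hat, hgf (a * s) has,
    mul_div_cancel_left₀ t ha0.ne', mul_div_cancel_left₀ s ha0.ne']
  -- |t - s| ≤ M₁ * |X - Y|
  have hts : |t - s| ≤ M₁ * |f (a * t) / a - f (a * s) / a| := by
    have h1 := hg_lip (f (a * t)) ⟨a * t, hat, rfl⟩ (f (a * s)) ⟨a * s, has, rfl⟩
    rw [hgf (a * t) hat, hgf (a * s) has] at h1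
    have h2 : |a * t - a * s| = a * |t - s| := by
      rw [← mul_sub, abs_mul, abs_of_pos ha0]
    have h3 : |f (a * t) / a - f (a * s) / a| = |f (a * t) - f (a * s)| / a := by
      rw [div_sub_div_same, abs_div, abs_of_pos ha0]
    have h4 : |f (a * t) - f (a * s)| = a * |f (a * t) / a - f (a * s) / a| := by
      rw [h3]; field_simp
    rw [h2, h4] at h1
    nlinarith [h1, ha0]
  have hmain := hMVT t ht s hs
  have habs : 0 ≤ |f (a * t) / a - f (a * s) / a| := abs_nonneg _
  have hba : 0 < b - a := sub_pos.2 hab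
  have step2 := mul_le_mul_of_nonneg_left hts
    (mul_nonneg (mul_nonneg hM2 hba.le) hR.le)
  have h5 : 0 ≤ M₁ * (M₂ * ((b - a) * (R * |f (a * t) / a - f (a * s) / a|))) :=
    mul_nonneg hM1 (mul_nonneg hM2 (mul_nonneg hba.le (mul_nonneg hR.le habs)))
  nlinarith [hmain, step2, h5]
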